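/- For every ξ ∈ ℂ with |ξ| > R and every 1 ≤ q ≤ ∞, the averaged quantity ( ⨍_{|y| ≤ 1/R} |e^{2i ξ̄·y} − 1|^q dm(y) )^{1/q} is bounded above and below by absolute positive constants independent of ξ, R and q. -/

import Mathlib

open MeasureTheory ENNReal Metric

noncomputable section

/-- The normalized (average) measure on the disk of radius `r` centered at `0` in `ℂ`. -/
def avgBall (r : ℝ) : Measure ℂ :=
  (volume (ball (0 : ℂ) r))⁻¹ • volume.restrict (ball (0 : ℂ) r)

open intervalIntegral Real Set Function in
theorem ibp_core (b : ℝ) (hb : 0 < b) :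
    |∫ φ in (-(π/2))..(π/2), Real.cos φ ^ 2 * Real.cos (b * Real.sin φ)| ≤ 2 / b := by
  have hu : ∀ φ ∈ Set.uIcc (-(π/2)) (π/2), HasDerivAt Real.cos (-Real.sin φ) φ :=
    fun φ _ => Real.hasDerivAt_cos φ
  have hv : ∀ φ ∈ Set.uIcc (-(π/2)) (π/2),
      HasDerivAt (fun φ => Real.sin (b * Real.sin φ)) (Real.cos (b * Real.sin φ) * (b * Real.cos φ)) φ := by
    intro φ _
    have h1 : HasDerivAt (fun φ : ℝ => b * Real.sin φ) (b * Real.cos φ) φ :=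
      (Real.hasDerivAt_sin φ).const_mul b
    exact (Real.hasDerivAt_sin (b * Real.sin φ)).comp φ h1
  have c1 : Continuous fun φ : ℝ => -Real.sin φ := Real.continuous_sin.neg
  have c2 : Continuous fun φ : ℝ => Real.cos (b * Real.sin φ) * (b * Real.cos φ) :=
    (Real.continuous_cos.comp (continuous_const.mul Real.continuous_sin)).mul
      (continuous_const.mul Real.continuous_cos)
  have hIBP := intervalIntegral.integral_mul_deriv_eq_deriv_mul hu hv
    (c1.intervalIntegrable _ _) (c2.intervalIntegrable _ _)
  have key : ∫ φ in (-(π/2))..(π/2), Real.cos φ ^ 2 * Real.cos (b * Real.sin φ) =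
      (1/b) * ∫ φ in (-(π/2))..(π/2), Real.sin φ * Real.sin (b * Real.sin φ) := by
    have e1 : ∀ φ : ℝ, Real.cos φ * (Real.cos (b * Real.sin φ) * (b * Real.cos φ)) =
        b * (Real.cos φ ^ 2 * Real.cos (b * Real.sin φ)) := by intro φ; ring
    rw [intervalIntegral.integral_congr (g := fun φ => b * (Real.cos φ ^ 2 * Real.cos (b * Real.sin φ)))
      (fun φ _ => e1 φ)] at hIBP
    rw [intervalIntegral.integral_const_mul] at hIBP
    have e2 : ∫ φ in (-(π/2))..(π/2), -Real.sin φ * Real.sin (b * Real.sin φ) =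
        - ∫ φ in (-(π/2))..(π/2), Real.sin φ * Real.sin (b * Real.sin φ) := by
      rw [← intervalIntegral.integral_neg]; congr 1; ext φ; ring
    rw [e2, Real.cos_neg, Real.cos_pi_div_two] at hIBP
    have hB : b * ∫ φ in (-(π/2))..(π/2), Real.cos φ ^ 2 * Real.cos (b * Real.sin φ) =
        ∫ φ in (-(π/2))..(π/2), Real.sin φ * Real.sin (b * Real.sin φ) := by linarith [hIBP]
    rw [← hB, one_div, inv_mul_cancel_left₀ (ne_of_gt hb)]
  have habs : |∫ φ in (-(π/2))..(π/2), Real.sin φ * Real.sin (b * Real.sin φ)| ≤ 2 := by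
    have cs : Continuous fun φ : ℝ => Real.sin φ * Real.sin (b * Real.sin φ) :=
      Real.continuous_sin.mul (Real.continuous_sin.comp (continuous_const.mul Real.continuous_sin))
    have h1 : |∫ φ in (-(π/2))..(π/2), Real.sin φ * Real.sin (b * Real.sin φ)| ≤
        ∫ φ in (-(π/2))..(π/2), |Real.sin φ| := by
      refine (intervalIntegral.abs_integral_le_integral_abs (by linarith [Real.pi_pos])).trans ?_
      refine intervalIntegral.integral_mono_on (by linarith [Real.pi_pos])
        ((cs.abs).intervalIntegrable _ _)
        ((Real.continuous_sin.abs).intervalIntegrable _ _) ?_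
      intro φ _
      rw [abs_mul]
      calc |Real.sin φ| * |Real.sin (b * Real.sin φ)| ≤ |Real.sin φ| * 1 :=
            mul_le_mul_of_nonneg_left (Real.abs_sin_le_one _) (abs_nonneg _)
      _ = |Real.sin φ| := mul_one _
    have h2 : ∫ φ in (-(π/2))..(π/2), |Real.sin φ| = 2 := by
      have pi2 : (0:ℝ) ≤ π/2 := by linarith [Real.pi_pos]
      have hsplit : ∫ φ in (-(π/2))..(π/2), |Real.sin φ| =
          (∫ φ in (-(π/2))..(0:ℝ), |Real.sin φ|) + ∫ φ in (0:ℝ)..(π/2), |Real.sin φ| := by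
        rw [intervalIntegral.integral_add_adjacent_intervals] <;>
          exact (Real.continuous_sin.abs).intervalIntegrable _ _
      have ha : ∫ φ in (-(π/2))..(0:ℝ), |Real.sin φ| = 1 := by
        rw [intervalIntegral.integral_congr (g := fun φ => -Real.sin φ)]
        · rw [intervalIntegral.integral_neg, integral_sin]; simp
        · intro φ hφ
          rw [Set.uIcc_of_le (by linarith), Set.mem_Icc] at hφ
          exact abs_of_nonpos (Real.sin_nonpos_of_nonpos_of_neg_pi_le hφ.2
            (by linarith [Real.pi_pos, hφ.1]))
      have hbb : ∫ φ in (0:ℝ)..(π/2), |Real.sin φ| = 1 := by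
        rw [intervalIntegral.integral_congr (g := fun φ => Real.sin φ)]
        · rw [integral_sin]; simp
        · intro φ hφ
          rw [Set.uIcc_of_le pi2, Set.mem_Icc] at hφ
          exact abs_of_nonneg (Real.sin_nonneg_of_nonneg_of_le_pi hφ.1
            (by linarith [Real.pi_pos, hφ.2]))
      rw [hsplit, ha, hbb]; norm_num
    linarith [h1, h2]
  rw [key, abs_mul, abs_of_nonneg (by positivity : (0:ℝ) ≤ 1/b)]
  calc (1/b) * |∫ φ in (-(π/2))..(π/2), Real.sin φ * Real.sin (b * Real.sin φ)| ≤ (1/b) * 2 :=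
        mul_le_mul_of_nonneg_left habs (by positivity)
  _ = 2 / b := by ring

open intervalIntegral Real Set Function in
theorem subst_lemma (ρ a : ℝ) (hρ : 0 < ρ) :
    ∫ x in (-ρ)..ρ, 2 * Real.sqrt (ρ^2 - x^2) * Real.cos (a * x) =
    ∫ φ in (-(π/2))..(π/2), 2 * ρ^2 * (Real.cos φ ^ 2 * Real.cos (a * ρ * Real.sin φ)) := by
  have hg : ∀ φ ∈ Set.uIcc (-(π/2)) (π/2),
      HasDerivAt (fun φ => ρ * Real.sin φ) (ρ * Real.cos φ) φ :=
    fun φ _ => (Real.hasDerivAt_sin φ).const_mul ρ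
  have hg' : ContinuousOn (fun φ => ρ * Real.cos φ) (Set.uIcc (-(π/2)) (π/2)) :=
    (continuous_const.mul Real.continuous_cos).continuousOn
  have hf : Continuous fun x => 2 * Real.sqrt (ρ^2 - x^2) * Real.cos (a * x) :=
    ((continuous_const.mul ((continuous_const.sub (continuous_pow 2)).sqrt)).mul
      (Real.continuous_cos.comp (continuous_const.mul continuous_id)))
  have key := intervalIntegral.integral_comp_smul_deriv hg hg' hf
  -- key : ∫ φ in .., (ρ cos φ) • f (ρ sin φ) = ∫ x in ρ sin(-(π/2)) .. ρ sin (π/2), f x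
  rw [Real.sin_neg, Real.sin_pi_div_two] at key
  simp only [mul_neg, mul_one, smul_eq_mul] at key
  rw [← key]
  apply intervalIntegral.integral_congr
  intro φ hφ
  rw [Set.uIcc_of_le (by linarith [Real.pi_pos]), Set.mem_Icc] at hφ
  have hcos : 0 ≤ Real.cos φ := Real.cos_nonneg_of_mem_Icc ⟨hφ.1, hφ.2⟩
  have hsq : Real.sqrt (ρ^2 - (ρ * Real.sin φ)^2) = ρ * Real.cos φ := by
    have : ρ^2 - (ρ * Real.sin φ)^2 = (ρ * Real.cos φ)^2 := by
      have := Real.sin_sq_add_cos_sq φ; nlinarith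
    rw [this, Real.sqrt_sq (by positivity)]
  simp only [smul_eq_mul, Function.comp_apply]
  rw [hsq]
  ring_nf

open intervalIntegral Real Set Function in
theorem disk_to_line (ρ a : ℝ) (hρ : 0 < ρ) :
    ∫ z in Metric.ball (0:ℂ) ρ, Real.cos (a * z.re) ∂volume =
    ∫ x in (-ρ)..ρ, 2 * Real.sqrt (ρ^2 - x^2) * Real.cos (a * x) := by
  set S : Set (ℝ × ℝ) := {p | p.1^2 + p.2^2 < ρ^2} with hS
  have hSmeas : MeasurableSet S := by
    apply measurableSet_lt
    · exact ((measurable_fst.pow_const 2).add (measurable_snd.pow_const 2))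
    · exact measurable_const
  have hpre : (Complex.measurableEquivRealProd) ⁻¹' S = Metric.ball (0:ℂ) ρ := by
    ext z
    simp only [Set.mem_preimage, Complex.measurableEquivRealProd_apply, hS, Set.mem_setOf_eq,
      Metric.mem_ball, Complex.dist_eq, sub_zero]
    have h1 : ‖z‖ ^ 2 = z.re^2 + z.im^2 := by
      rw [Complex.sq_norm, Complex.normSq_apply]; ring
    constructor
    · intro h; nlinarith [norm_nonneg z]
    · intro h; nlinarith [norm_nonneg z]
  have step1 : ∫ z in Metric.ball (0:ℂ) ρ, Real.cos (a * z.re) ∂volume =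
      ∫ p in S, Real.cos (a * p.1) ∂(volume : Measure (ℝ × ℝ)) := by
    have := Complex.volume_preserving_equiv_real_prod.setIntegral_preimage_emb
      (Complex.measurableEquivRealProd.measurableEmbedding)
      (fun p : ℝ × ℝ => Real.cos (a * p.1)) S
    rw [hpre] at this
    exact this
  rw [step1]
  have hSvol : volume S ≠ ⊤ := by
    rw [← Complex.volume_preserving_equiv_real_prod.measure_preimage hSmeas.nullMeasurableSet, hpre]
    exact (measure_ball_lt_top).ne
  have hInt : Integrable (S.indicator fun p : ℝ × ℝ => Real.cos (a * p.1)) volume := by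
    rw [integrable_indicator_iff hSmeas]
    apply Measure.integrableOn_of_bounded hSvol
    · exact ((Real.continuous_cos.comp (continuous_const.mul continuous_fst)).aestronglyMeasurable)
    · exact ae_of_all _ fun p => by
        simpa using Real.abs_cos_le_one (a * p.1)
  have step2 : ∫ p in S, Real.cos (a * p.1) ∂(volume : Measure (ℝ × ℝ)) =
      ∫ x : ℝ, ∫ y : ℝ, S.indicator (fun p : ℝ × ℝ => Real.cos (a * p.1)) (x, y) := by
    rw [← MeasureTheory.integral_indicator hSmeas]
    rw [MeasureTheory.Measure.volume_eq_prod] at hInt ⊢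
    exact integral_prod _ hInt
  rw [step2]
  have inner : ∀ x : ℝ, (∫ y : ℝ, S.indicator (fun p : ℝ × ℝ => Real.cos (a * p.1)) (x, y)) =
      Real.cos (a * x) * (2 * Real.sqrt (ρ^2 - x^2)) := by
    intro x
    have hset : (fun y : ℝ => S.indicator (fun p : ℝ × ℝ => Real.cos (a * p.1)) (x, y)) =
        fun y : ℝ => (Set.Ioo (-Real.sqrt (ρ^2 - x^2)) (Real.sqrt (ρ^2 - x^2))).indicator
          (fun _ => Real.cos (a * x)) y := by
      funext y
      have hmem : (x, y) ∈ S ↔ y ∈ Set.Ioo (-Real.sqrt (ρ^2 - x^2)) (Real.sqrt (ρ^2 - x^2)) := by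
        simp only [hS, Set.mem_setOf_eq, Set.mem_Ioo]
        rw [← abs_lt]
        constructor
        · intro h
          have hc : 0 ≤ ρ^2 - x^2 := by nlinarith [sq_nonneg y]
          have h2 : Real.sqrt (y^2) < Real.sqrt (ρ^2 - x^2) :=
            (Real.sqrt_lt_sqrt_iff (sq_nonneg y)).2 (by linarith)
          rwa [Real.sqrt_sq_eq_abs] at h2
        · intro h
          rcases le_or_gt (ρ^2 - x^2) 0 with hc | hc
          · exfalso
            rw [Real.sqrt_eq_zero'.2 hc] at h
            exact absurd h (not_lt.2 (abs_nonneg y))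
          · have := Real.sq_sqrt hc.le
            nlinarith [abs_nonneg y, sq_abs y]
      by_cases hy : (x, y) ∈ S
      · rw [Set.indicator_of_mem hy, Set.indicator_of_mem (hmem.1 hy)]
      · rw [Set.indicator_of_notMem hy, Set.indicator_of_notMem (fun hh => hy (hmem.2 hh))]
    rw [hset, integral_indicator_const _ measurableSet_Ioo, measureReal_def, Real.volume_Ioo]
    rw [ENNReal.toReal_ofReal (by have := Real.sqrt_nonneg (ρ^2 - x^2); linarith)]
    have h3 : Real.sqrt (ρ^2 - x^2) - -Real.sqrt (ρ^2 - x^2) = 2 * Real.sqrt (ρ^2 - x^2) := by ring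
    rw [h3]
    simp [smul_eq_mul, mul_comm]
  simp_rw [inner]
  have hsupp : Function.support (fun x => Real.cos (a*x) * (2 * Real.sqrt (ρ^2 - x^2))) ⊆
      Set.Ioc (-ρ) ρ := by
    intro x hx
    simp only [Function.mem_support, ne_eq] at hx
    by_contra hmem
    simp only [Set.mem_Ioc, not_and_or, not_lt, not_le] at hmem
    have hle : ρ^2 - x^2 ≤ 0 := by
      rcases hmem with h | h
      · nlinarith
      · nlinarith
    rw [Real.sqrt_eq_zero'.2 hle] at hx
    simp at hx
  rw [← intervalIntegral.integral_eq_integral_of_support_subset hsupp]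
  apply intervalIntegral.integral_congr
  intro x _
  ring

open intervalIntegral Real Set Function in
theorem rotate_lemma (ρ : ℝ) (w : ℂ) (hw : w ≠ 0) :
    ∫ z in Metric.ball (0:ℂ) ρ, Real.cos ((w * z).re) ∂volume =
    ∫ z in Metric.ball (0:ℂ) ρ, Real.cos (‖w‖ * z.re) ∂volume := by
  have hwn : ‖w‖ ≠ 0 := norm_ne_zero_iff.2 hw
  set c : ℂ := (starRingEnd ℂ) w / ‖w‖ with hc
  have hcnorm : ‖c‖ = 1 := by
    rw [hc, norm_div]
    simp only [RCLike.norm_conj, Complex.norm_real, Real.norm_eq_abs, abs_norm]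
    rw [div_self hwn]
  have hcmem : c ∈ Metric.sphere (0:ℂ) 1 := by
    simp [mem_sphere_zero_iff_norm, hcnorm]
  set e : ℂ ≃ₗᵢ[ℝ] ℂ := rotation ⟨c, hcmem⟩ with he
  have hepre : e ⁻¹' (Metric.ball (0:ℂ) ρ) = Metric.ball (0:ℂ) ρ := by
    ext z
    simp only [Set.mem_preimage, mem_ball_zero_iff]
    rw [e.norm_map]
  have hkey := (e.measurePreserving).setIntegral_preimage_emb
    (e.toHomeomorph.measurableEmbedding)
    (fun y : ℂ => Real.cos ((w * y).re)) (Metric.ball (0:ℂ) ρ)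
  rw [hepre] at hkey
  rw [← hkey]
  apply setIntegral_congr_fun measurableSet_ball
  intro z _
  have : w * (e z) = (‖w‖ : ℂ) * z := by
    rw [he]
    show w * (c * z) = _
    have h1 : w * (starRingEnd ℂ) w = ((‖w‖ : ℂ))^2 := by
      rw [Complex.mul_conj, Complex.normSq_eq_norm_sq]
      push_cast
      ring
    rw [hc]
    have habs : (‖w‖ : ℂ) ≠ 0 := by
      exact_mod_cast hwn
    field_simp
    linear_combination z * h1
  simp only
  rw [this]
  norm_num [Complex.ofReal_mul]

theorem avgBall_prob (r : ℝ) (hr : 0 < r) : IsProbabilityMeasure (avgBall r) := by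
  have h0 : volume (ball (0:ℂ) r) ≠ 0 := (measure_ball_pos volume 0 hr).ne'
  have h1 : volume (ball (0:ℂ) r) ≠ ⊤ := measure_ball_lt_top.ne
  exact ProbabilityTheory.cond_isProbabilityMeasure_of_finite h0 h1


open Real in
theorem ball_cos_bound (ρ : ℝ) (hρ : 0 < ρ) (w : ℂ) (hw2 : 2 ≤ ‖w‖ * ρ) :
    |∫ z in Metric.ball (0:ℂ) ρ, Real.cos ((w * z).re) ∂volume| ≤ 2 * ρ^2 := by
  have hwpos : 0 < ‖w‖ := by nlinarith
  have hw0 : w ≠ 0 := norm_pos_iff.1 hwpos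
  rw [rotate_lemma ρ w hw0, disk_to_line ρ ‖w‖ hρ, subst_lemma ρ ‖w‖ hρ]
  rw [intervalIntegral.integral_const_mul, abs_mul, abs_of_nonneg (by positivity : (0:ℝ) ≤ 2*ρ^2)]
  have hb : 0 < ‖w‖ * ρ := by linarith
  have := ibp_core (‖w‖ * ρ) hb
  calc 2*ρ^2 * |∫ φ in (-(π/2))..(π/2), Real.cos φ ^ 2 * Real.cos (‖w‖ * ρ * Real.sin φ)|
      ≤ 2*ρ^2 * (2 / (‖w‖ * ρ)) := mul_le_mul_of_nonneg_left this (by positivity)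
    _ ≤ 2*ρ^2 * 1 := by
        apply mul_le_mul_of_nonneg_left _ (by positivity)
        rw [div_le_one hb]; linarith
    _ = 2*ρ^2 := mul_one _

open Real in
theorem cos_avg_le (ρ : ℝ) (hρ : 0 < ρ) (w : ℂ) (hw2 : 2 ≤ ‖w‖ * ρ) :
    ∫ y, Real.cos ((w * y).re) ∂(avgBall ρ) ≤ 2 / Real.pi := by
  rw [avgBall, integral_smul_measure, smul_eq_mul]
  have hV : ((volume (ball (0:ℂ) ρ))⁻¹).toReal = (Real.pi * ρ^2)⁻¹ := by
    rw [ENNReal.toReal_inv]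
    congr 1
    rw [Complex.volume_ball, ENNReal.toReal_mul, ENNReal.toReal_pow, ENNReal.toReal_ofReal hρ.le,
      ENNReal.coe_toReal, NNReal.coe_real_pi]
    ring
  rw [hV]
  have hb := ball_cos_bound ρ hρ w hw2
  have hpi := Real.pi_pos
  have h1 : ∫ z in Metric.ball (0:ℂ) ρ, Real.cos ((w * z).re) ∂volume ≤ 2 * ρ^2 :=
    (le_abs_self _).trans hb
  calc (Real.pi * ρ^2)⁻¹ * ∫ z in Metric.ball (0:ℂ) ρ, Real.cos ((w * z).re) ∂volume
      ≤ (Real.pi * ρ^2)⁻¹ * (2 * ρ^2) := by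
        apply mul_le_mul_of_nonneg_left h1 (by positivity)
    _ = 2 / Real.pi := by field_simp

theorem norm_exp_sub_one_le (t : ℝ) : ‖Complex.exp ((t:ℂ) * Complex.I) - 1‖ ≤ 2 := by
  calc ‖Complex.exp ((t:ℂ) * Complex.I) - 1‖ ≤ ‖Complex.exp ((t:ℂ) * Complex.I)‖ + ‖(1:ℂ)‖ :=
        norm_sub_le _ _
  _ ≤ 2 := by rw [Complex.norm_exp_ofReal_mul_I]; norm_num

theorem norm_exp_sub_one_sq (t : ℝ) :
    ‖Complex.exp ((t:ℂ) * Complex.I) - 1‖^2 = 2 - 2 * Real.cos t := by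
  rw [Complex.exp_mul_I]
  have h : (Complex.cos t + Complex.sin t * Complex.I - 1) =
      Complex.ofReal (Real.cos t - 1) + Complex.ofReal (Real.sin t) * Complex.I := by
    push_cast [Complex.ofReal_cos, Complex.ofReal_sin]; ring
  rw [h, Complex.sq_norm, Complex.normSq_add_mul_I]
  nlinarith [Real.sin_sq_add_cos_sq t]

/-- for every `ξ ∈ ℂ` with `|ξ| > R` and every `1 ≤ q ≤ ∞`, the
averaged quantity `(⨍_{|y| ≤ 1/R} |e^{2i ξ̄·y} − 1|^q dm(y))^{1/q}` is bounded above
and below by absolute positive constants independent of `ξ`, `R` and `q`.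
Here `ξ̄·y = Re(ξ y)` is the real scalar product of `ξ̄` and `y` as vectors in `ℝ²`,
and the `L^q` average is expressed as the `eLpNorm` with respect to the normalized
measure on the disk of radius `1/R`. -/
theorem stmt3 :
    ∃ c C : ℝ≥0∞, 0 < c ∧ C < ∞ ∧
      ∀ (R : ℝ), 0 < R → ∀ (ξ : ℂ), R < ‖ξ‖ → ∀ (q : ℝ≥0∞), 1 ≤ q →
        c ≤ eLpNorm
              (fun y : ℂ => Complex.exp (2 * Complex.I * ((ξ * y).re : ℂ)) - 1) q
              (avgBall (1 / R)) ∧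
        eLpNorm
              (fun y : ℂ => Complex.exp (2 * Complex.I * ((ξ * y).re : ℂ)) - 1) q
              (avgBall (1 / R)) ≤ C := by
  have hpi := Real.pi_gt_three
  refine ⟨ENNReal.ofReal (1 - 2/Real.pi), ENNReal.ofReal 2, ?_, ?_, ?_⟩
  · rw [ENNReal.ofReal_pos]
    have : 2 / Real.pi < 1 := by
      rw [div_lt_one (by linarith)]; linarith
    linarith
  · exact ENNReal.ofReal_lt_top
  intro R hR ξ hξ q hq
  set ρ : ℝ := 1 / R with hρdef
  have hρ : 0 < ρ := by positivity
  haveI : IsProbabilityMeasure (avgBall ρ) := avgBall_prob ρ hρ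
  set f : ℂ → ℂ := fun y => Complex.exp (2 * Complex.I * ((ξ * y).re : ℂ)) - 1 with hf
  -- rewrite the exponent
  have hform : ∀ y : ℂ, f y = Complex.exp (((2 * (ξ * y).re : ℝ) : ℂ) * Complex.I) - 1 := by
    intro y; rw [hf]; push_cast; ring_nf
  have hbound : ∀ y : ℂ, ‖f y‖ ≤ 2 := by
    intro y; rw [hform y]; exact norm_exp_sub_one_le _
  have hsq : ∀ y : ℂ, ‖f y‖^2 = 2 - 2 * Real.cos (((2*ξ) * y).re) := by
    intro y
    rw [hform y, norm_exp_sub_one_sq]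
    congr 2
    have : (2*ξ*y).re = 2 * (ξ*y).re := by
      rw [show (2:ℂ)*ξ*y = 2*(ξ*y) by ring]
      simp [Complex.mul_re]
    rw [this]
  have hcont : Continuous f := by
    rw [hf]
    apply Continuous.sub _ continuous_const
    apply Complex.continuous_exp.comp
    apply Continuous.mul continuous_const
    exact Complex.continuous_ofReal.comp (Complex.continuous_re.comp (continuous_const.mul continuous_id))
  have hmeas : AEStronglyMeasurable f (avgBall ρ) := hcont.aestronglyMeasurable
  -- integrability
  have hintf : Integrable f (avgBall ρ) := by
    apply Integrable.mono' (integrable_const 2) hmeas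
    exact ae_of_all _ hbound
  have hint1 : Integrable (fun y => ‖f y‖) (avgBall ρ) := hintf.norm
  have hint2 : Integrable (fun y => ‖f y‖^2) (avgBall ρ) := by
    apply Integrable.mono' (integrable_const 4) (hcont.norm.pow 2).aestronglyMeasurable
    refine ae_of_all _ fun y => ?_
    have h1 := hbound y
    have h2 : (0:ℝ) ≤ ‖f y‖ := norm_nonneg _
    show ‖‖f y‖^2‖ ≤ 4
    rw [Real.norm_eq_abs, abs_of_nonneg (by positivity)]
    nlinarith
  have hintcos : Integrable (fun y => Real.cos (((2*ξ) * y).re)) (avgBall ρ) := by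
    apply Integrable.mono' (integrable_const 1)
    · exact (Real.continuous_cos.comp (Complex.continuous_re.comp
        (continuous_const.mul continuous_id))).aestronglyMeasurable
    · exact ae_of_all _ fun y => by simpa using Real.abs_cos_le_one _
  -- the cosine average bound
  have hcos : ∫ y, Real.cos (((2*ξ) * y).re) ∂(avgBall ρ) ≤ 2 / Real.pi := by
    apply cos_avg_le ρ hρ (2*ξ)
    have : ‖(2:ℂ)*ξ‖ = 2 * ‖ξ‖ := by simp [norm_mul]
    rw [this, hρdef]
    rw [mul_one_div, le_div_iff₀ hR]
    nlinarith
  -- lower bound on ∫ ‖f‖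
  have hI2 : ∫ y, ‖f y‖^2 ∂(avgBall ρ) = 2 - 2 * ∫ y, Real.cos (((2*ξ) * y).re) ∂(avgBall ρ) := by
    rw [show (fun y => ‖f y‖^2) = fun y => 2 - 2 * Real.cos (((2*ξ) * y).re) from funext hsq]
    rw [integral_sub (integrable_const 2) (hintcos.const_mul 2), integral_const,
      integral_const_mul]
    simp
  have hI1 : 1 - 2/Real.pi ≤ ∫ y, ‖f y‖ ∂(avgBall ρ) := by
    have hhalf : ∫ y, ‖f y‖^2 ∂(avgBall ρ) ≤ 2 * ∫ y, ‖f y‖ ∂(avgBall ρ) := by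
      rw [← integral_const_mul]
      apply integral_mono hint2 (hint1.const_mul 2)
      intro y
      show ‖f y‖^2 ≤ 2 * ‖f y‖
      have h1 := hbound y
      have h2 : (0:ℝ) ≤ ‖f y‖ := norm_nonneg _
      nlinarith
    have : 2 - 2 * (2/Real.pi) ≤ ∫ y, ‖f y‖^2 ∂(avgBall ρ) := by
      rw [hI2]; linarith
    linarith
  -- eLpNorm bounds
  constructor
  · have e1 : eLpNorm f 1 (avgBall ρ) = ENNReal.ofReal (∫ y, ‖f y‖ ∂(avgBall ρ)) := by
      rw [eLpNorm_one_eq_lintegral_enorm, ← ofReal_integral_norm_eq_lintegral_enorm hintf]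
    have e2 : eLpNorm f 1 (avgBall ρ) ≤ eLpNorm f q (avgBall ρ) :=
      eLpNorm_le_eLpNorm_of_exponent_le hq hmeas
    refine le_trans ?_ e2
    rw [e1]
    exact ENNReal.ofReal_le_ofReal hI1
  · have := eLpNorm_le_of_ae_bound (μ := avgBall ρ) (p := q) (f := f)
      (ae_of_all _ hbound)
    simpa [measure_univ, ENNReal.one_rpow] using this
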